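/- Let G = (Q' ∪ S', E) be a complete split graph, i.e. Q' is a clique with |Q'| ≥ 1, S' is a stable set with |S'| ≥ 2, and every vertex of Q' is adjacent to every vertex of S'. Then η(G) = |Q'|. -/

import Mathlib

open Classical in
/-- Sum of the labels `f` over the open neighborhood of `v` in `G`. -/
noncomputable def nbrSum {V : Type*} [Fintype V] (G : SimpleGraph V) (f : V → ℕ) (v : V) : ℕ :=
  ∑ w ∈ Finset.univ.filter (fun w => G.Adj v w), f w

open Classical in
/-- The degree of `v` in `G`. -/
noncomputable def deg {V : Type*} [Fintype V] (G : SimpleGraph V) (v : V) : ℕ :=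
  (Finset.univ.filter (fun w => G.Adj v w)).card

/-- `f : V → {1,…,k}` is an additive `k`-coloring of `G`: labels lie in `{1,…,k}` and
adjacent vertices get distinct open-neighborhood sums. -/
def IsAdditiveColoring {V : Type*} [Fintype V] (G : SimpleGraph V) (k : ℕ) (f : V → ℕ) : Prop :=
  (∀ v, 1 ≤ f v ∧ f v ≤ k) ∧ ∀ u v, G.Adj u v → nbrSum G f u ≠ nbrSum G f v

/-- The additive chromatic number `η(G)`: the least `k` admitting an additive `k`-coloring. -/
noncomputable def eta {V : Type*} [Fintype V] (G : SimpleGraph V) : ℕ :=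
  sInf {k | ∃ f : V → ℕ, IsAdditiveColoring G k f}

/-- The join `G ∨ K_q` of `G` with the complete graph on `q` vertices. -/
def joinK {α : Type*} (G : SimpleGraph α) (q : ℕ) : SimpleGraph (α ⊕ Fin q) where
  Adj x y :=
    match x, y with
    | Sum.inl u, Sum.inl v => G.Adj u v
    | Sum.inr i, Sum.inr j => i ≠ j
    | Sum.inl _, Sum.inr _ => True
    | Sum.inr _, Sum.inl _ => True
  symm := ⟨by
    rintro (u | i) (v | j) h
    · exact h.symm
    · trivial
    · trivial
    · exact Ne.symm h⟩
  loopless := ⟨by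
    rintro (u | i) h
    · exact G.irrefl h
    · exact h rfl⟩

section EtaSplitHelpers

variable {q s : ℕ}

lemma nbrSum_inl (f : Fin s ⊕ Fin q → ℕ) (u : Fin s) :
    nbrSum (joinK (⊥ : SimpleGraph (Fin s)) q) f (Sum.inl u) = ∑ j, f (Sum.inr j) := by
  classical
  unfold nbrSum
  rw [Finset.sum_filter, Fintype.sum_sum_type]
  simp [joinK]

lemma nbrSum_inr (f : Fin s ⊕ Fin q → ℕ) (i : Fin q) :
    nbrSum (joinK (⊥ : SimpleGraph (Fin s)) q) f (Sum.inr i) =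
      (∑ u, f (Sum.inl u)) + ∑ j ∈ Finset.univ.erase i, f (Sum.inr j) := by
  classical
  unfold nbrSum
  rw [Finset.sum_filter, Fintype.sum_sum_type]
  simp only [joinK, SimpleGraph.bot_adj, Finset.sum_boole, ne_eq, ite_not, if_true]
  congr 1
  rw [← Finset.sum_erase Finset.univ (a := i) (f := fun x => if i = x then 0 else f (Sum.inr x))
    (by simp)]
  refine Finset.sum_congr rfl fun x hx => ?_
  rw [if_neg fun h => (Finset.mem_erase.mp hx).1 h.symm]

end EtaSplitHelpers

/-- The complete split graph with clique of size `q ≥ 1` and stable set of size `s ≥ 2`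
has additive chromatic number `q`. -/
theorem eta_complete_split (q s : ℕ) (hq : 1 ≤ q) (hs : 2 ≤ s) :
    eta (joinK (⊥ : SimpleGraph (Fin s)) q) = q := by
  unfold eta IsAdditiveColoring
  classical
  set G := joinK (⊥ : SimpleGraph (Fin s)) q with hG
  set f : Fin s ⊕ Fin q → ℕ := Sum.elim (fun _ => q) (fun i => (i : ℕ) + 1) with hf
  have hsq : q < s * q := by nlinarith
  have hmem : ∃ g : Fin s ⊕ Fin q → ℕ,
      ((∀ v, 1 ≤ g v ∧ g v ≤ q) ∧ ∀ u v, G.Adj u v → nbrSum G g u ≠ nbrSum G g v) := by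
    refine ⟨f, fun v => ?_, ?_⟩
    · rcases v with u | i
      · exact ⟨hq, le_refl q⟩
      · exact ⟨Nat.le_add_left 1 _, i.isLt⟩
    · have hTS : (∑ u : Fin s, f (Sum.inl u)) = s * q := by simp [hf, Finset.sum_const, mul_comm]
      have key : ∀ (u : Fin s) (j : Fin q), nbrSum G f (Sum.inl u) ≠ nbrSum G f (Sum.inr j) := by
        intro u j hEq
        rw [nbrSum_inl, nbrSum_inr, hTS] at hEq
        have h2 : (∑ j' ∈ Finset.univ.erase j, f (Sum.inr j')) + f (Sum.inr j)
            = ∑ j' : Fin q, f (Sum.inr j') :=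
          Finset.sum_erase_add _ _ (Finset.mem_univ j)
        have : f (Sum.inr j) = s * q := by omega
        have hj : f (Sum.inr j) ≤ q := j.isLt
        omega
      rintro (u | i) (v | j) h
      · simp [hG, joinK] at h
      · exact key u j
      · exact (key v i).symm
      · intro hEq
        rw [nbrSum_inr, nbrSum_inr] at hEq
        have hA : (∑ j' ∈ Finset.univ.erase i, f (Sum.inr j')) + f (Sum.inr i)
            = ∑ j' : Fin q, f (Sum.inr j') := Finset.sum_erase_add _ _ (Finset.mem_univ i)
        have hB : (∑ j' ∈ Finset.univ.erase j, f (Sum.inr j')) + f (Sum.inr j)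
            = ∑ j' : Fin q, f (Sum.inr j') := Finset.sum_erase_add _ _ (Finset.mem_univ j)
        have hAB : (∑ j' ∈ Finset.univ.erase i, f (Sum.inr j'))
            = ∑ j' ∈ Finset.univ.erase j, f (Sum.inr j') := by omega
        have hfij : f (Sum.inr i) = f (Sum.inr j) := by omega
        have : (i : ℕ) = (j : ℕ) := by simpa [hf] using hfij
        have hij : i ≠ j := by simpa [hG, joinK] using h
        exact hij (Fin.ext this)
  have hlow : ∀ k ∈ {k | ∃ g : Fin s ⊕ Fin q → ℕ,
      ((∀ v, 1 ≤ g v ∧ g v ≤ k) ∧ ∀ u v, G.Adj u v → nbrSum G g u ≠ nbrSum G g v)}, q ≤ k := by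
    rintro k ⟨g, hb, hadj⟩
    have hinj : Function.Injective (fun i : Fin q => g (Sum.inr i)) := by
      intro i j hfij
      by_contra hne
      have hadj' := hadj (Sum.inr i) (Sum.inr j) (by exact hne)
      rw [nbrSum_inr, nbrSum_inr] at hadj'
      have hA : (∑ j' ∈ Finset.univ.erase i, g (Sum.inr j')) + g (Sum.inr i)
          = ∑ j' : Fin q, g (Sum.inr j') := Finset.sum_erase_add _ _ (Finset.mem_univ i)
      have hB : (∑ j' ∈ Finset.univ.erase j, g (Sum.inr j')) + g (Sum.inr j)
          = ∑ j' : Fin q, g (Sum.inr j') := Finset.sum_erase_add _ _ (Finset.mem_univ j)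
      simp only at hfij
      omega
    have hcard : (Finset.univ : Finset (Fin q)).card ≤ (Finset.Icc 1 k).card :=
      Finset.card_le_card_of_injOn (fun i => g (Sum.inr i))
        (fun i _ => Finset.mem_Icc.mpr ⟨(hb _).1, (hb _).2⟩) hinj.injOn
    simpa using hcard
  refine le_antisymm (Nat.sInf_le hmem) (hlow _ (Nat.sInf_mem ⟨q, hmem⟩))
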